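/- The map ⟨·,·⟩ : V × V → ℂ defined by ⟨f(z), g(z)⟩ = L(f(z)·ḡ(1/z)) is an inner product on V; in particular, for every nonzero Laurent polynomial f ∈ V, the value ⟨f(z), f(z)⟩ = L(f(z)·f̄(1/z)) is a positive real number. -/

import Mathlib

open Polynomial LaurentPolynomial Finset

noncomputable section

/-- Extension of the Verblunsky coefficients to integer indices, with the
convention `α₋₁ = -1` (and junk value `-1` for all negative indices). -/
def az (α : ℕ → ℂ) (k : ℤ) : ℂ := if 0 ≤ k then α k.toNat else -1

/-- The monic OPUC `Φ_n` defined by Szegő's recurrence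
`Φ_{n+1}(z) = z·Φ_n(z) - conj(α_n)·Φ_n^*(z)`, where `Φ_n^*` is the reverse
polynomial `reflect n (map conj Φ_n)`. -/
def szego (α : ℕ → ℂ) : ℕ → Polynomial ℂ
  | 0 => 1
  | n + 1 =>
      Polynomial.X * szego α n -
        Polynomial.C ((starRingEnd ℂ) (α n)) *
          Polynomial.reflect n ((szego α n).map (starRingEnd ℂ))

/-- `f̄(1/z)` as a Laurent polynomial, for a polynomial `f`. -/
def polyBarInv (f : Polynomial ℂ) : LaurentPolynomial ℂ :=
  f.sum fun k c => LaurentPolynomial.C ((starRingEnd ℂ) c) * LaurentPolynomial.T (-(k : ℤ))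

/-- `f̄(1/z)` as a Laurent polynomial, for a Laurent polynomial `f`. -/
def laurentBarInv (f : LaurentPolynomial ℂ) : LaurentPolynomial ℂ :=
  Finsupp.sum f.coeff fun k c => LaurentPolynomial.C ((starRingEnd ℂ) c) * LaurentPolynomial.T (-k)

/-- The generalized moment `μ_{n,r,s} = ⟨Φ_s(z), z^n·Φ_r(z)⟩ / ⟨Φ_s(z), Φ_s(z)⟩`,
where `⟨f,g⟩ = L(f(z)·ḡ(1/z))` and `⟨Φ_s, Φ_s⟩ = ∏_{j<s} (1 - |α_j|²)`. -/
def genMom (L : LaurentPolynomial ℂ →ₗ[ℂ] ℂ) (α : ℕ → ℂ) (n : ℤ) (r s : ℕ) : ℂ :=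
  L (Polynomial.toLaurent (szego α s) *
      laurentBarInv (LaurentPolynomial.T n * Polynomial.toLaurent (szego α r))) /
    ∏ j ∈ Finset.range s, ((1 - Complex.normSq (α j) : ℝ) : ℂ)

/-- `IsLatticePath S p l q` : the list of steps `l`, starting at `p`, forms a lattice
path from `p` to `q` lying weakly above the x-axis, each step `st` taken from a
position `x` satisfying the (possibly position-dependent) step condition `S x st`. -/
def IsLatticePath (S : ℤ × ℤ → ℤ × ℤ → Prop) : ℤ × ℤ → List (ℤ × ℤ) → ℤ × ℤ → Prop
  | p, [], q => p = q ∧ 0 ≤ p.2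
  | p, st :: rest, q => 0 ≤ p.2 ∧ S p st ∧ IsLatticePath S (p + st) rest q

/-- The weight of a path: the product of the weights of its steps, where the weight
of a step may depend on its starting position. -/
def pathWeight (w : ℤ × ℤ → ℤ × ℤ → ℂ) : ℤ × ℤ → List (ℤ × ℤ) → ℂ
  | _, [] => 1
  | p, st :: rest => w p st * pathWeight w (p + st) rest

/-- Łukasiewicz steps: `(1, k)` with `k ≤ 1`. -/
def lukaStep (_p st : ℤ × ℤ) : Prop := st.1 = 1 ∧ st.2 ≤ 1

/-- Łukasiewicz step weights: an up-step has weight `1`, and a step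
`(a,b) → (a+1,b-k)` (`0 ≤ k ≤ b`) has weight
`-α_b·conj(α_{b-k-1})·∏_{j=b-k}^{b-1} (1-|α_j|²)`. -/
def wtLstep (α : ℕ → ℂ) (p st : ℤ × ℤ) : ℂ :=
  if st.2 = 1 then 1
  else
    -(az α p.2) * (starRingEnd ℂ) (az α (p.2 + st.2 - 1)) *
      ∏ j ∈ Finset.Ico (p.2 + st.2) p.2, ((1 - Complex.normSq (az α j) : ℝ) : ℂ)

/-- Gentle Motzkin steps: `(1,1)` (only at even `a+b`), `(1,0)`, `(1,-1)` (only at odd `a+b`). -/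
def gentleStep (p st : ℤ × ℤ) : Prop :=
  (st = (1, 1) ∧ Even (p.1 + p.2)) ∨ st = (1, 0) ∨ (st = (1, -1) ∧ Odd (p.1 + p.2))

/-- Gentle Motzkin step weights. -/
def wtMstep (α : ℕ → ℂ) (p st : ℤ × ℤ) : ℂ :=
  if st = (1, 1) then 1
  else if st = (1, -1) then ((1 - Complex.normSq (az α (p.2 - 1)) : ℝ) : ℂ)
  else if Even (p.1 + p.2) then az α p.2
  else -(starRingEnd ℂ) (az α (p.2 - 1))

/-- Schröder steps: `(1,1)`, `(1,0)`, `(0,-1)`. -/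
def schStep (_p st : ℤ × ℤ) : Prop := st = (1, 1) ∨ st = (1, 0) ∨ st = (0, -1)

/-- Schröder step weights. -/
def wtSstep (α : ℕ → ℂ) (p st : ℤ × ℤ) : ℂ :=
  if st = (1, 1) then 1
  else if st = (1, 0) then -((starRingEnd ℂ) (az α (p.2 - 1)) / (starRingEnd ℂ) (az α p.2))
  else
    ((starRingEnd ℂ) (az α (p.2 - 2)) / (starRingEnd ℂ) (az α (p.2 - 1))) *
      ((1 - Complex.normSq (az α (p.2 - 1)) : ℝ) : ℂ)


lemma opuc_smulC (a : ℂ) (f : LaurentPolynomial ℂ) :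
    a • f = LaurentPolynomial.C a * f := by
  rw [LaurentPolynomial.C_eq_algebraMap, Algebra.smul_def]

lemma barInv_single (n : ℤ) (a : ℂ) :
    laurentBarInv (AddMonoidAlgebra.single n a) = AddMonoidAlgebra.single (-n) ((starRingEnd ℂ) a) := by
  unfold laurentBarInv
  rw [AddMonoidAlgebra.coeff_single, Finsupp.sum_single_index (by simp), LaurentPolynomial.single_eq_C_mul_T]

lemma barInv_add (f g : LaurentPolynomial ℂ) :
    laurentBarInv (f + g) = laurentBarInv f + laurentBarInv g := by
  unfold laurentBarInv
  rw [AddMonoidAlgebra.coeff_add]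
  apply Finsupp.sum_add_index' <;> intros <;> simp [add_mul]

lemma barInv_zero : laurentBarInv 0 = 0 := by
  unfold laurentBarInv; rw [AddMonoidAlgebra.coeff_zero]; exact Finsupp.sum_zero_index

lemma barInv_smul (a : ℂ) (f : LaurentPolynomial ℂ) :
    laurentBarInv (a • f) = (starRingEnd ℂ) a • laurentBarInv f := by
  unfold laurentBarInv
  rw [AddMonoidAlgebra.coeff_smul, Finsupp.sum_smul_index (by simp), Finsupp.smul_sum]
  refine Finsupp.sum_congr fun k _ => ?_
  rw [opuc_smulC, map_mul, map_mul, mul_assoc]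

lemma barInv_sub (f g : LaurentPolynomial ℂ) :
    laurentBarInv (f - g) = laurentBarInv f - laurentBarInv g := by
  have h := barInv_add (f - g) g
  rw [sub_add_cancel] at h
  rw [h]; ring

lemma barInv_CT (n : ℤ) (a : ℂ) :
    laurentBarInv (LaurentPolynomial.C a * LaurentPolynomial.T n)
      = LaurentPolynomial.C ((starRingEnd ℂ) a) * LaurentPolynomial.T (-n) := by
  rw [← LaurentPolynomial.single_eq_C_mul_T, barInv_single, LaurentPolynomial.single_eq_C_mul_T]

lemma barInv_mul (f g : LaurentPolynomial ℂ) :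
    laurentBarInv (f * g) = laurentBarInv f * laurentBarInv g := by
  induction f using LaurentPolynomial.induction_on' with
  | add p q hp hq => rw [add_mul, barInv_add, hp, hq, barInv_add, add_mul]
  | C_mul_T n a =>
    induction g using LaurentPolynomial.induction_on' with
    | add p q hp hq => rw [mul_add, barInv_add, hp, hq, barInv_add, mul_add]
    | C_mul_T m b =>
      rw [← LaurentPolynomial.single_eq_C_mul_T, ← LaurentPolynomial.single_eq_C_mul_T,
        AddMonoidAlgebra.single_mul_single, barInv_single, barInv_single, barInv_single,
        AddMonoidAlgebra.single_mul_single, map_mul, neg_add]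

lemma barInv_barInv (f : LaurentPolynomial ℂ) : laurentBarInv (laurentBarInv f) = f := by
  induction f using LaurentPolynomial.induction_on' with
  | add p q hp hq => rw [barInv_add, barInv_add, hp, hq]
  | C_mul_T n a =>
    rw [← LaurentPolynomial.single_eq_C_mul_T, barInv_single, barInv_single]
    simp

lemma barInv_T (n : ℤ) : laurentBarInv (LaurentPolynomial.T n) = LaurentPolynomial.T (-n) := by
  have := barInv_CT n (1 : ℂ)
  simpa using this

lemma barInv_C (a : ℂ) :
    laurentBarInv (LaurentPolynomial.C a) = LaurentPolynomial.C ((starRingEnd ℂ) a) := by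
  have := barInv_CT 0 a
  simpa using this

lemma barInv_one : laurentBarInv (1 : LaurentPolynomial ℂ) = 1 := by
  have := barInv_C 1; simpa using this

lemma barInv_toLaurent (p : Polynomial ℂ) :
    laurentBarInv (Polynomial.toLaurent p) = polyBarInv p := by
  induction p using Polynomial.induction_on' with
  | add p q hp hq =>
    rw [map_add, barInv_add, hp, hq]
    unfold polyBarInv
    exact (Polynomial.sum_add_index p q _ (by simp) (fun i b c => by rw [map_add, map_add, add_mul])).symm
  | monomial n a =>
    rw [Polynomial.toLaurent_C_mul_T, barInv_CT]
    unfold polyBarInv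
    exact (Polynomial.sum_monomial_index (n := n) a (fun k c => LaurentPolynomial.C ((starRingEnd ℂ) c) * LaurentPolynomial.T (-(k:ℤ))) (by simp)).symm

lemma toLaurent_as_sum (p : Polynomial ℂ) :
    Polynomial.toLaurent p = ∑ j ∈ p.support, p.coeff j • LaurentPolynomial.T (j : ℤ) := by
  conv_lhs => rw [Polynomial.as_sum_support p]
  rw [map_sum]
  refine Finset.sum_congr rfl fun j _ => ?_
  rw [Polynomial.toLaurent_C_mul_T, opuc_smulC]

lemma barInv_sum {s : Finset ℕ} (f : ℕ → LaurentPolynomial ℂ) :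
    laurentBarInv (∑ j ∈ s, f j) = ∑ j ∈ s, laurentBarInv (f j) := by
  classical
  induction s using Finset.induction_on with
  | empty => simpa using barInv_zero
  | insert _ _ h ih => rw [Finset.sum_insert h, Finset.sum_insert h, barInv_add, ih]

lemma barInv_toLaurent_as_sum (p : Polynomial ℂ) :
    laurentBarInv (Polynomial.toLaurent p)
      = ∑ j ∈ p.support, (starRingEnd ℂ) (p.coeff j) • LaurentPolynomial.T (-(j : ℤ)) := by
  rw [toLaurent_as_sum, barInv_sum]
  refine Finset.sum_congr rfl fun j _ => ?_
  rw [barInv_smul, barInv_T]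

lemma reflect_sum {s : Finset ℕ} (f : ℕ → Polynomial ℂ) (N : ℕ) :
    Polynomial.reflect N (∑ j ∈ s, f j) = ∑ j ∈ s, Polynomial.reflect N (f j) := by
  classical
  induction s using Finset.induction_on with
  | empty => simp
  | insert _ _ h ih => rw [Finset.sum_insert h, Finset.sum_insert h, Polynomial.reflect_add, ih]

lemma szego_monic (α : ℕ → ℂ) : ∀ n, (szego α n).Monic ∧ (szego α n).natDegree = n := by
  intro n
  induction n with
  | zero => exact ⟨Polynomial.monic_one, Polynomial.natDegree_one⟩
  | succ n ih =>
    obtain ⟨hm, hd⟩ := ih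
    have hXm : (Polynomial.X * szego α n).Monic := Polynomial.monic_X.mul hm
    have hXd : (Polynomial.X * szego α n).natDegree = n + 1 := by
      rw [Polynomial.monic_X.natDegree_mul hm, Polynomial.natDegree_X, hd, add_comm]
    have hrd : (Polynomial.C ((starRingEnd ℂ) (α n)) *
        Polynomial.reflect n ((szego α n).map (starRingEnd ℂ))).degree ≤ (n : ℕ) := by
      have h2 : (Polynomial.reflect n ((szego α n).map (starRingEnd ℂ))).degree ≤ (n : ℕ) := by
        rw [Polynomial.degree_le_iff_coeff_zero]
        intro m hm'
        have hmn : n < m := by exact_mod_cast hm'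
        rw [Polynomial.coeff_reflect, Polynomial.revAt_eq_self_of_lt hmn]
        exact Polynomial.coeff_eq_zero_of_natDegree_lt (by rwa [Polynomial.natDegree_map, hd])
      refine le_trans (Polynomial.degree_mul_le _ _) ?_
      exact le_trans (add_le_add Polynomial.degree_C_le h2) (by simp)
    have hlt : (Polynomial.C ((starRingEnd ℂ) (α n)) *
        Polynomial.reflect n ((szego α n).map (starRingEnd ℂ))).degree
          < (Polynomial.X * szego α n).degree := by
      rw [Polynomial.degree_eq_natDegree hXm.ne_zero, hXd]
      exact lt_of_le_of_lt hrd (by exact_mod_cast WithBot.coe_lt_coe.mpr (Nat.lt_succ_self n))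
    constructor
    · exact hXm.sub_of_left hlt
    · show (Polynomial.X * szego α n - _).natDegree = n + 1
      rw [← hXd]
      exact Polynomial.natDegree_eq_natDegree (Polynomial.degree_sub_eq_left_of_degree_lt hlt)

lemma reflect_toLaurent (p : Polynomial ℂ) (n : ℕ) (h : ∀ j ∈ p.support, j ≤ n) :
    Polynomial.toLaurent (Polynomial.reflect n (p.map (starRingEnd ℂ)))
      = LaurentPolynomial.T (n : ℤ) * laurentBarInv (Polynomial.toLaurent p) := by
  rw [barInv_toLaurent_as_sum, Finset.mul_sum]
  have hps : (p.map (starRingEnd ℂ)) = ∑ j ∈ p.support, Polynomial.monomial j ((starRingEnd ℂ) (p.coeff j)) := by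
    conv_lhs => rw [Polynomial.as_sum_support p]
    rw [Polynomial.map_sum]
    refine Finset.sum_congr rfl fun j _ => ?_
    rw [Polynomial.map_monomial]
  rw [hps, reflect_sum, map_sum]
  refine Finset.sum_congr rfl fun j hj => ?_
  rw [← Polynomial.C_mul_X_pow_eq_monomial, Polynomial.reflect_C_mul_X_pow,
    Polynomial.revAt_le (h j hj), Polynomial.C_mul_X_pow_eq_monomial,
    Polynomial.toLaurent_C_mul_T, mul_smul_comm, opuc_smulC]
  rw [← LaurentPolynomial.T_add]
  congr 2
  push_cast [Nat.cast_sub (h j hj)]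
  ring

lemma szego_rec (α : ℕ → ℂ) (n : ℕ) :
    Polynomial.toLaurent (szego α (n + 1))
      = LaurentPolynomial.T 1 * Polynomial.toLaurent (szego α n)
        - LaurentPolynomial.C ((starRingEnd ℂ) (α n)) *
            (LaurentPolynomial.T (n : ℤ) * laurentBarInv (Polynomial.toLaurent (szego α n))) := by
  show Polynomial.toLaurent (Polynomial.X * szego α n - _) = _
  rw [map_sub, map_mul, map_mul, Polynomial.toLaurent_X, Polynomial.toLaurent_C,
    reflect_toLaurent _ n (fun j hj => le_trans (Polynomial.le_natDegree_of_mem_supp j hj)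
      (le_of_eq (szego_monic α n).2))]
lemma opuc_span (α : ℕ → ℂ) :
    Submodule.span ℂ ((Set.range fun n => Polynomial.toLaurent (szego α n)) ∪
      (Set.range fun n => laurentBarInv (Polynomial.toLaurent (szego α n)))) = ⊤ := by
  set S := (Set.range fun n => Polynomial.toLaurent (szego α n)) ∪
      (Set.range fun n => laurentBarInv (Polynomial.toLaurent (szego α n))) with hS
  rw [Submodule.eq_top_iff']
  have key : ∀ k : ℕ, LaurentPolynomial.T (k : ℤ) ∈ Submodule.span ℂ S ∧
      LaurentPolynomial.T (-(k : ℤ)) ∈ Submodule.span ℂ S := by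
    intro k
    induction k using Nat.strong_induction_on with
    | _ k ih =>
      have hm := (szego_monic α k).1
      have hd := (szego_monic α k).2
      have hq : ∀ j ∈ (szego α k - Polynomial.X ^ k).support, j < k := by
        intro j hj
        by_contra hjk
        push_neg at hjk
        refine Polynomial.mem_support_iff.mp hj ?_
        rw [Polynomial.coeff_sub, Polynomial.coeff_X_pow]
        rcases eq_or_lt_of_le hjk with rfl | hlt
        · rw [if_pos rfl]
          have h1 := hm.coeff_natDegree
          rw [hd] at h1
          rw [h1, sub_self]
        · rw [if_neg (by omega), Polynomial.coeff_eq_zero_of_natDegree_lt (by rw [hd]; omega),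
            sub_zero]
      have h3 : LaurentPolynomial.T (k : ℤ) =
          Polynomial.toLaurent (szego α k)
            - Polynomial.toLaurent (szego α k - Polynomial.X ^ k) := by
        rw [map_sub, Polynomial.toLaurent_X_pow]; ring
      constructor
      · have h1 : Polynomial.toLaurent (szego α k) ∈ Submodule.span ℂ S :=
          Submodule.subset_span (Set.mem_union_left _ ⟨k, rfl⟩)
        have h2 : Polynomial.toLaurent (szego α k - Polynomial.X ^ k) ∈ Submodule.span ℂ S := by
          rw [toLaurent_as_sum]
          exact Submodule.sum_mem _ fun j hj => Submodule.smul_mem _ _ ((ih j (hq j hj)).1)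
        rw [h3]; exact Submodule.sub_mem _ h1 h2
      · have h1 : laurentBarInv (Polynomial.toLaurent (szego α k)) ∈ Submodule.span ℂ S :=
          Submodule.subset_span (Set.mem_union_right _ ⟨k, rfl⟩)
        have h2 : laurentBarInv (Polynomial.toLaurent (szego α k - Polynomial.X ^ k))
            ∈ Submodule.span ℂ S := by
          rw [barInv_toLaurent_as_sum]
          exact Submodule.sum_mem _ fun j hj => Submodule.smul_mem _ _ ((ih j (hq j hj)).2)
        have h4 := congrArg laurentBarInv h3
        rw [barInv_T, barInv_sub] at h4
        rw [h4]; exact Submodule.sub_mem _ h1 h2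
  intro f
  induction f using LaurentPolynomial.induction_on' with
  | add p q hp hq => exact Submodule.add_mem _ hp hq
  | C_mul_T n a =>
    rw [← opuc_smulC]
    refine Submodule.smul_mem _ _ ?_
    rcases Int.eq_nat_or_neg n with ⟨m, rfl | rfl⟩
    · exact (key m).1
    · exact (key m).2

lemma opuc_conj (α : ℕ → ℂ) (L : LaurentPolynomial ℂ →ₗ[ℂ] ℂ) (hL1 : L 1 = 1)
    (hLphi : ∀ k : ℕ, 1 ≤ k → L (Polynomial.toLaurent (szego α k)) = 0)
    (hLbar : ∀ k : ℕ, 1 ≤ k → L (polyBarInv (szego α k)) = 0) :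
    ∀ h, L (laurentBarInv h) = (starRingEnd ℂ) (L h) := by
  intro h
  have hh : h ∈ Submodule.span ℂ ((Set.range fun n => Polynomial.toLaurent (szego α n)) ∪
      (Set.range fun n => laurentBarInv (Polynomial.toLaurent (szego α n)))) := by
    rw [opuc_span α]; trivial
  induction hh using Submodule.span_induction with
  | mem x hx =>
    obtain ⟨n, rfl⟩ | ⟨n, rfl⟩ := hx
    · dsimp only
      rcases Nat.eq_zero_or_pos n with rfl | hn
      · have h0 : Polynomial.toLaurent (szego α 0) = 1 := map_one _
        rw [h0, barInv_one, hL1]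
        simp
      · rw [barInv_toLaurent, hLbar n hn, hLphi n hn]
        simp
    · dsimp only
      rcases Nat.eq_zero_or_pos n with rfl | hn
      · have h0 : Polynomial.toLaurent (szego α 0) = 1 := map_one _
        rw [h0, barInv_one, barInv_one, hL1]
        simp
      · rw [barInv_barInv, barInv_toLaurent, hLphi n hn, hLbar n hn]
        simp
  | zero => simp [barInv_zero]
  | add x y _ _ hx hy => rw [barInv_add, map_add, map_add, hx, hy, map_add]
  | smul a x _ hx => rw [barInv_smul, map_smul, map_smul, smul_eq_mul, smul_eq_mul, map_mul, hx]
lemma opuc_ortho (α : ℕ → ℂ) (L : LaurentPolynomial ℂ →ₗ[ℂ] ℂ) (hL1 : L 1 = 1)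
    (hLphi : ∀ k : ℕ, 1 ≤ k → L (Polynomial.toLaurent (szego α k)) = 0)
    (hLbar : ∀ k : ℕ, 1 ≤ k → L (polyBarInv (szego α k)) = 0) :
    ∀ n : ℕ,
      (∀ j : ℕ, j < n →
        L (LaurentPolynomial.T (-(j : ℤ)) * Polynomial.toLaurent (szego α n)) = 0) ∧
      L (LaurentPolynomial.T (-(n : ℤ)) * Polynomial.toLaurent (szego α n))
        = ((∏ j ∈ Finset.range n, (1 - Complex.normSq (α j)) : ℝ) : ℂ) := by
  have hconj := opuc_conj α L hL1 hLphi hLbar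
  intro n
  induction n with
  | zero =>
    refine ⟨fun j hj => absurd hj (Nat.not_lt_zero j), ?_⟩
    have h0 : Polynomial.toLaurent (szego α 0) = 1 := map_one _
    rw [h0]
    simp [hL1]
  | succ n ih =>
    obtain ⟨H1, H2⟩ := ih
    have main : ∀ j : ℤ,
        L (LaurentPolynomial.T (-j) * Polynomial.toLaurent (szego α (n + 1)))
          = L (LaurentPolynomial.T (1 - j) * Polynomial.toLaurent (szego α n))
            - (starRingEnd ℂ) (α n) *
                (starRingEnd ℂ)
                  (L (LaurentPolynomial.T (j - (n : ℤ)) * Polynomial.toLaurent (szego α n))) := by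
      intro j
      rw [szego_rec, mul_sub, map_sub]
      congr 1
      · congr 1
        rw [show (1 : ℤ) - j = -j + 1 by ring, LaurentPolynomial.T_add]
        ring
      · have hb : LaurentPolynomial.T ((n : ℤ) - j) *
            laurentBarInv (Polynomial.toLaurent (szego α n))
            = laurentBarInv
                (LaurentPolynomial.T (j - (n : ℤ)) * Polynomial.toLaurent (szego α n)) := by
          rw [barInv_mul, barInv_T, neg_sub]
        have harg : LaurentPolynomial.T (-j) * (LaurentPolynomial.C ((starRingEnd ℂ) (α n)) *
            (LaurentPolynomial.T (n : ℤ) * laurentBarInv (Polynomial.toLaurent (szego α n))))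
            = LaurentPolynomial.C ((starRingEnd ℂ) (α n)) *
              (LaurentPolynomial.T ((n : ℤ) - j) *
                laurentBarInv (Polynomial.toLaurent (szego α n))) := by
          rw [show (n : ℤ) - j = -j + n by ring, LaurentPolynomial.T_add]
          ring
        rw [harg, hb, ← opuc_smulC, map_smul, smul_eq_mul, hconj]
    constructor
    · intro j hj
      rcases Nat.eq_zero_or_pos j with rfl | hj1
      · have h00 : LaurentPolynomial.T (-((0 : ℕ) : ℤ)) = (1 : LaurentPolynomial ℂ) := by
          norm_num
        rw [h00, one_mul]
        exact hLphi (n + 1) (Nat.succ_le_succ (Nat.zero_le n))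
      · have e := main (j : ℤ)
        rw [show (1 : ℤ) - (j : ℤ) = -(((j - 1 : ℕ)) : ℤ) by
              rw [Nat.cast_sub hj1]; push_cast; ring,
            show (j : ℤ) - (n : ℤ) = -(((n - j : ℕ)) : ℤ) by
              rw [Nat.cast_sub (Nat.lt_succ_iff.mp hj)]; ring] at e
        rw [e, H1 (j - 1) (by omega), H1 (n - j) (by omega), map_zero, mul_zero, sub_zero]
    · set K : ℂ := ((∏ j ∈ Finset.range n, (1 - Complex.normSq (α j)) : ℝ) : ℂ) with hK
      have hKconj : (starRingEnd ℂ) K = K := Complex.conj_ofReal _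
      have e1 : L (LaurentPolynomial.T 1 * Polynomial.toLaurent (szego α n))
          = (starRingEnd ℂ) (α n) * K := by
        have h := congrArg L (szego_rec α n)
        rw [hLphi (n + 1) (Nat.succ_le_succ (Nat.zero_le n)), map_sub] at h
        have hb : LaurentPolynomial.T ((n : ℤ)) * laurentBarInv (Polynomial.toLaurent (szego α n))
            = laurentBarInv
                (LaurentPolynomial.T (-(n : ℤ)) * Polynomial.toLaurent (szego α n)) := by
          rw [barInv_mul, barInv_T, neg_neg]
        rw [← opuc_smulC, map_smul, smul_eq_mul, hb, hconj, H2, hKconj] at h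
        exact eq_of_sub_eq_zero h.symm
      have e2 := main ((n : ℤ) + 1)
      rw [show (1 : ℤ) - ((n : ℤ) + 1) = -(n : ℤ) by ring,
        show ((n : ℤ) + 1) - (n : ℤ) = 1 by ring] at e2
      have hc : -(((n + 1 : ℕ)) : ℤ) = -((n : ℤ) + 1) := by push_cast; ring
      rw [hc, e2, H2, e1, map_mul, Complex.conj_conj, hKconj]
      have hmc : (starRingEnd ℂ) (α n) * α n = (Complex.normSq (α n) : ℂ) := by
        rw [mul_comm, Complex.mul_conj]
      rw [Finset.prod_range_succ, Complex.ofReal_mul, ← hK, ← mul_assoc, hmc,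
        Complex.ofReal_sub, Complex.ofReal_one]
      ring
lemma opuc_ip_poly (L : LaurentPolynomial ℂ →ₗ[ℂ] ℂ) (q : Polynomial ℂ)
    (f : LaurentPolynomial ℂ) :
    L (f * laurentBarInv (Polynomial.toLaurent q))
      = ∑ j ∈ q.support,
          (starRingEnd ℂ) (q.coeff j) * L (LaurentPolynomial.T (-(j : ℤ)) * f) := by
  rw [barInv_toLaurent_as_sum, Finset.mul_sum, map_sum]
  refine Finset.sum_congr rfl fun j _ => ?_
  rw [mul_smul_comm, map_smul, smul_eq_mul, mul_comm f]

lemma opuc_ip_phi_low (α : ℕ → ℂ) (L : LaurentPolynomial ℂ →ₗ[ℂ] ℂ) (hL1 : L 1 = 1)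
    (hLphi : ∀ k : ℕ, 1 ≤ k → L (Polynomial.toLaurent (szego α k)) = 0)
    (hLbar : ∀ k : ℕ, 1 ≤ k → L (polyBarInv (szego α k)) = 0)
    (n : ℕ) (q : Polynomial ℂ) (hq : ∀ j ∈ q.support, j < n) :
    L (Polynomial.toLaurent (szego α n) * laurentBarInv (Polynomial.toLaurent q)) = 0 := by
  rw [opuc_ip_poly]
  refine Finset.sum_eq_zero fun j hj => ?_
  rw [(opuc_ortho α L hL1 hLphi hLbar n).1 j (hq j hj), mul_zero]

lemma opuc_ip_phi_phi (α : ℕ → ℂ) (L : LaurentPolynomial ℂ →ₗ[ℂ] ℂ) (hL1 : L 1 = 1)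
    (hLphi : ∀ k : ℕ, 1 ≤ k → L (Polynomial.toLaurent (szego α k)) = 0)
    (hLbar : ∀ k : ℕ, 1 ≤ k → L (polyBarInv (szego α k)) = 0) (n : ℕ) :
    L (Polynomial.toLaurent (szego α n) * laurentBarInv (Polynomial.toLaurent (szego α n)))
      = ((∏ j ∈ Finset.range n, (1 - Complex.normSq (α j)) : ℝ) : ℂ) := by
  obtain ⟨H1, H2⟩ := opuc_ortho α L hL1 hLphi hLbar n
  have hm := (szego_monic α n).1
  have hd := (szego_monic α n).2
  have h1 := hm.coeff_natDegree
  rw [hd] at h1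
  have hns : n ∈ (szego α n).support := by
    rw [Polynomial.mem_support_iff, h1]; exact one_ne_zero
  rw [opuc_ip_poly, Finset.sum_eq_single n
    (fun j hj hjn => by
      rw [H1 j (lt_of_le_of_ne (hd ▸ Polynomial.le_natDegree_of_mem_supp j hj) hjn), mul_zero])
    (fun h => absurd hns h), h1, map_one, one_mul, H2]

lemma opuc_pos_poly (α : ℕ → ℂ) (hα : ∀ k, ‖α k‖ < 1)
    (L : LaurentPolynomial ℂ →ₗ[ℂ] ℂ) (hL1 : L 1 = 1)
    (hLphi : ∀ k : ℕ, 1 ≤ k → L (Polynomial.toLaurent (szego α k)) = 0)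
    (hLbar : ∀ k : ℕ, 1 ≤ k → L (polyBarInv (szego α k)) = 0) :
    ∀ p : Polynomial ℂ, ∃ c : ℝ, 0 ≤ c ∧ (p ≠ 0 → 0 < c) ∧
      L (Polynomial.toLaurent p * laurentBarInv (Polynomial.toLaurent p)) = (c : ℂ) := by
  have hconj := opuc_conj α L hL1 hLphi hLbar
  have key : ∀ N : ℕ, ∀ p : Polynomial ℂ, p.natDegree = N →
      ∃ c : ℝ, 0 ≤ c ∧ (p ≠ 0 → 0 < c) ∧
        L (Polynomial.toLaurent p * laurentBarInv (Polynomial.toLaurent p)) = (c : ℂ) := by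
    intro N
    induction N using Nat.strong_induction_on with
    | _ N ih =>
      intro p hpN
      rcases eq_or_ne p 0 with rfl | hp0
      · exact ⟨0, le_refl 0, fun h => absurd rfl h, by simp [barInv_zero]⟩
      set a := p.leadingCoeff with ha
      have ha0 : a ≠ 0 := Polynomial.leadingCoeff_ne_zero.mpr hp0
      have hm := (szego_monic α N).1
      have hd := (szego_monic α N).2
      have h1 := hm.coeff_natDegree
      rw [hd] at h1
      set r := p - Polynomial.C a * szego α N with hr
      have hpa : p.coeff N = a := by rw [ha, Polynomial.leadingCoeff, hpN]
      have hrc : ∀ j, N ≤ j → r.coeff j = 0 := by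
        intro j hj
        rw [hr, Polynomial.coeff_sub, Polynomial.coeff_C_mul]
        rcases eq_or_lt_of_le hj with rfl | hlt
        · rw [hpa, h1, mul_one, sub_self]
        · rw [Polynomial.coeff_eq_zero_of_natDegree_lt (by omega : p.natDegree < j),
            Polynomial.coeff_eq_zero_of_natDegree_lt
              (show (szego α N).natDegree < j by rw [hd]; omega),
            mul_zero, sub_zero]
      have hrsupp : ∀ j ∈ r.support, j < N := fun j hj => by
        by_contra h
        push_neg at h
        exact Polynomial.mem_support_iff.mp hj (hrc j h)
      set P := Polynomial.toLaurent (szego α N) with hP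
      set R := Polynomial.toLaurent r with hR
      have hdecomp : Polynomial.toLaurent p = LaurentPolynomial.C a * P + R := by
        rw [hR, hr, map_sub, Polynomial.toLaurent_C_mul_eq]
        ring
      have hbar : laurentBarInv (LaurentPolynomial.C a * P + R)
          = LaurentPolynomial.C ((starRingEnd ℂ) a) * laurentBarInv P + laurentBarInv R := by
        rw [barInv_add, barInv_mul, barInv_C]
      have hrres : ∃ cr : ℝ, 0 ≤ cr ∧ L (R * laurentBarInv R) = (cr : ℂ) := by
        rcases eq_or_ne r 0 with hr0 | hr0
        · refine ⟨0, le_refl 0, ?_⟩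
          rw [hR, hr0]
          simp [barInv_zero]
        · have hrd : r.natDegree < N := by
            refine (Polynomial.natDegree_lt_iff_degree_lt hr0).mpr ?_
            rw [Polynomial.degree_lt_iff_coeff_zero]
            exact hrc
          obtain ⟨cr, h0, _, hL'⟩ := ih r.natDegree hrd r rfl
          exact ⟨cr, h0, hL'⟩
      obtain ⟨cr, hcr0, hcrL⟩ := hrres
      have hKpos : 0 < ∏ j ∈ Finset.range N, (1 - Complex.normSq (α j)) := by
        refine Finset.prod_pos fun j _ => ?_
        have h2 := hα j
        have h3 := norm_nonneg (α j)
        rw [Complex.normSq_eq_norm_sq]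
        nlinarith
      refine ⟨Complex.normSq a * (∏ j ∈ Finset.range N, (1 - Complex.normSq (α j))) + cr,
        add_nonneg (mul_nonneg (Complex.normSq_nonneg a) hKpos.le) hcr0,
        fun _ => add_pos_of_pos_of_nonneg
          (mul_pos (Complex.normSq_pos.mpr ha0) hKpos) hcr0, ?_⟩
      rw [hdecomp, hbar]
      have expand : (LaurentPolynomial.C a * P + R) *
          (LaurentPolynomial.C ((starRingEnd ℂ) a) * laurentBarInv P + laurentBarInv R)
          = LaurentPolynomial.C a * LaurentPolynomial.C ((starRingEnd ℂ) a) * (P * laurentBarInv P)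
            + LaurentPolynomial.C a * (P * laurentBarInv R)
            + LaurentPolynomial.C ((starRingEnd ℂ) a) * (R * laurentBarInv P)
            + R * laurentBarInv R := by ring
      rw [expand, map_add, map_add, map_add]
      have t1 : L (LaurentPolynomial.C a * LaurentPolynomial.C ((starRingEnd ℂ) a) *
          (P * laurentBarInv P)) = (Complex.normSq a : ℂ) *
            ((∏ j ∈ Finset.range N, (1 - Complex.normSq (α j)) : ℝ) : ℂ) := by
        rw [← map_mul, ← opuc_smulC, map_smul, smul_eq_mul, hP,
          opuc_ip_phi_phi α L hL1 hLphi hLbar N, Complex.mul_conj]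
      have t2 : L (LaurentPolynomial.C a * (P * laurentBarInv R)) = 0 := by
        rw [← opuc_smulC, map_smul, smul_eq_mul, hP, hR,
          opuc_ip_phi_low α L hL1 hLphi hLbar N r hrsupp, mul_zero]
      have t3 : L (LaurentPolynomial.C ((starRingEnd ℂ) a) * (R * laurentBarInv P)) = 0 := by
        have hswap : R * laurentBarInv P = laurentBarInv (P * laurentBarInv R) := by
          rw [barInv_mul, barInv_barInv, mul_comm]
        rw [← opuc_smulC, map_smul, smul_eq_mul, hswap, hconj, hP, hR,
          opuc_ip_phi_low α L hL1 hLphi hLbar N r hrsupp, map_zero, mul_zero]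
      rw [t1, t2, t3, hcrL]
      push_cast
      ring
  intro p
  exact key p.natDegree p rfl

/-- `⟨f,g⟩ = L(f(z)·ḡ(1/z))` is an inner product on the space of
Laurent polynomials: it is linear in the first argument, conjugate symmetric, and
for every nonzero `f` the value `⟨f,f⟩` is a positive real number. -/
theorem inner_product (α : ℕ → ℂ) (hα : ∀ k, ‖α k‖ < 1)
    (L : LaurentPolynomial ℂ →ₗ[ℂ] ℂ) (hL1 : L 1 = 1)
    (hLphi : ∀ k : ℕ, 1 ≤ k → L (Polynomial.toLaurent (szego α k)) = 0)
    (hLbar : ∀ k : ℕ, 1 ≤ k → L (polyBarInv (szego α k)) = 0) :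
    (∀ (a : ℂ) (f g h : LaurentPolynomial ℂ),
        L ((a • f + g) * laurentBarInv h) =
          a * L (f * laurentBarInv h) + L (g * laurentBarInv h)) ∧
    (∀ f g : LaurentPolynomial ℂ,
        L (f * laurentBarInv g) = (starRingEnd ℂ) (L (g * laurentBarInv f))) ∧
    (∀ f : LaurentPolynomial ℂ, f ≠ 0 →
        ∃ c : ℝ, 0 < c ∧ L (f * laurentBarInv f) = (c : ℂ)) := by
  have hconj := opuc_conj α L hL1 hLphi hLbar
  refine ⟨?_, ?_, ?_⟩
  · intro a f g h
    rw [add_mul, smul_mul_assoc, map_add, map_smul, smul_eq_mul]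
  · intro f g
    have hswap : g * laurentBarInv f = laurentBarInv (f * laurentBarInv g) := by
      rw [barInv_mul, barInv_barInv, mul_comm]
    rw [hswap, hconj, Complex.conj_conj]
  · intro f hf
    obtain ⟨n, p, hp⟩ := LaurentPolynomial.exists_T_pow f
    have hfp : f = Polynomial.toLaurent p * LaurentPolynomial.T (-(n : ℤ)) := by
      rw [hp, mul_assoc, ← LaurentPolynomial.T_add, add_neg_cancel, LaurentPolynomial.T_zero,
        mul_one]
    have hp0 : p ≠ 0 := by
      intro h0
      exact hf (by rw [hfp, h0, map_zero, zero_mul])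
    obtain ⟨c, _, hpos, hLc⟩ := opuc_pos_poly α hα L hL1 hLphi hLbar p
    refine ⟨c, hpos hp0, ?_⟩
    have hff : f * laurentBarInv f
        = Polynomial.toLaurent p * laurentBarInv (Polynomial.toLaurent p) := by
      rw [hfp, barInv_mul, barInv_T, neg_neg, mul_mul_mul_comm, ← LaurentPolynomial.T_add,
        neg_add_cancel, LaurentPolynomial.T_zero, mul_one]
    rw [hff, hLc]


end
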